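/- Let G be a countable discrete group, Σ = (σ_n : G → Sym(V_n)) a sofic approximation to G, A and B finite sets, μ a G-process on A^G, and (μ_n) a sequence of probability measures on A^{V_n} that locally weak* converges to μ over Σ. Let F ⊆ G be finite, let θ : A^F → B, and let φ = θ ∘ π_F : A^G → B be the corresponding F-local observable. Let c > 0 and let S_n ⊆ V_n be sets with |S_n| ≥ c·|V_n| for all n. Then for every ε > 0, for all sufficiently large n: H(μ_F) − (1/|S_n|)·H(π_{σ_n^F(S_n)*} μ_n) ≥ H_μ(φ) − (1/|S_n|)·H(π_{S_n*}(φ^{σ_n})_* μ_n) − ε, where σ_n^F(S) = {σ_n(g)(s) : g ∈ F, s ∈ S} and π_W : A^{V_n} → A^W (resp. π_W : B^{V_n} → B^W) denotes coordinate projection. -/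

import Mathlib

set_option linter.unusedSectionVars false
set_option linter.unnecessarySimpa false
set_option maxHeartbeats 2000000


open MeasureTheory Filter

/-- Shannon entropy of a measure on a finite set, with the convention `0 * log 0 = 0`. -/
noncomputable def shannonEntropy {D : Type*} [Fintype D] [MeasurableSpace D]
    (η : Measure D) : ℝ :=
  -∑ d : D, (η {d}).toReal * Real.log (η {d}).toReal

/-- Shannon entropy `H_μ(α)` of a finite-valued observable: the entropy of the
pushforward measure `α_* μ`. -/
noncomputable def obsEntropy {X D : Type*} [MeasurableSpace X] [Fintype D] [MeasurableSpace D]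
    (μ : Measure X) (α : X → D) : ℝ :=
  shannonEntropy (Measure.map α μ)

/-- Conditional Shannon entropy `H_μ(α | β) = H_μ((α,β)) - H_μ(β)`. -/
noncomputable def condEntropyObs {X D E : Type*} [MeasurableSpace X]
    [Fintype D] [MeasurableSpace D] [Fintype E] [MeasurableSpace E]
    (μ : Measure X) (α : X → D) (β : X → E) : ℝ :=
  obsEntropy μ (fun x => (α x, β x)) - obsEntropy μ β

/-- The Rokhlin distance `d^Rok_μ(α, β) = H_μ(α|β) + H_μ(β|α)`. -/
noncomputable def rokDist {X D E : Type*} [MeasurableSpace X]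
    [Fintype D] [MeasurableSpace D] [Fintype E] [MeasurableSpace E]
    (μ : Measure X) (α : X → D) (β : X → E) : ℝ :=
  condEntropyObs μ α β + condEntropyObs μ β α

/-- `σ = (σ_n : G → Sym(V_n))` is a sofic approximation to `G`. -/
def IsSoficApprox {G : Type*} [Group G] {V : ℕ → Type*} [∀ n, Fintype (V n)]
    (σ : ∀ n, G → Equiv.Perm (V n)) : Prop :=
  Tendsto (fun n => Fintype.card (V n)) atTop atTop ∧
    (∀ g h : G,
      Tendsto (fun n =>
          (Nat.card {v : V n // σ n g (σ n h v) = σ n (g * h) v} : ℝ) /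
            (Fintype.card (V n) : ℝ)) atTop (nhds 1)) ∧
    (∀ g : G, g ≠ 1 →
      Tendsto (fun n =>
          (Nat.card {v : V n // σ n g v = v} : ℝ) / (Fintype.card (V n) : ℝ))
        atTop (nhds 0))

/-- Total variation distance between two measures on a finite set. -/
noncomputable def tvDist {D : Type*} [Fintype D] [MeasurableSpace D]
    (η₁ η₂ : Measure D) : ℝ :=
  (∑ d : D, |(η₁ {d}).toReal - (η₂ {d}).toReal|) / 2

/-- The sequence of measures `μn n` on `V n → A` locally weak* converges over the sofic
approximation `σ` to the measure `μ` on `A^G`: for every finite `F ⊆ G` and `δ > 0`,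
eventually at least `(1-δ)|V_n|` of the `v ∈ V_n` satisfy
`‖(Π^{σ_n}_{v,F})_* μ_n − μ_F‖_TV < δ`. -/
def LocalWeakStarConverges {G : Type*} [Group G] [DecidableEq G] {V : ℕ → Type*}
    [∀ n, Fintype (V n)] {A : Type*} [Fintype A] [MeasurableSpace A]
    (σ : ∀ n, G → Equiv.Perm (V n)) (μn : ∀ n, Measure (V n → A))
    (μ : Measure (G → A)) : Prop :=
  ∀ (F : Finset G) (δ : ℝ), 0 < δ → ∀ᶠ n in atTop,
    ((1 - δ) * (Fintype.card (V n) : ℝ)) ≤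
      (Nat.card {v : V n //
        tvDist (Measure.map (fun (x : V n → A) (g : ↥F) => x (σ n g.1 v)) (μn n))
          (Measure.map (fun (a : G → A) (g : ↥F) => a g.1) μ) < δ} : ℝ)




section PMFLemmas


variable {Ω : Type*} [Fintype Ω] {D E C : Type*} [Fintype D] [DecidableEq D]
  [Fintype E] [DecidableEq E] [Fintype C] [DecidableEq C]

/-- Pushforward pmf of the weight vector `p` under the observable `α`. -/
noncomputable def pmOf (p : Ω → ℝ) (α : Ω → D) (d : D) : ℝ :=
  ∑ ω : Ω, if α ω = d then p ω else 0

/-- Entropy of the pushforward of `p` under `α`. -/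
noncomputable def entOf (p : Ω → ℝ) (α : Ω → D) : ℝ :=
  ∑ d : D, Real.negMulLog (pmOf p α d)

lemma pmOf_nonneg {p : Ω → ℝ} (hp : ∀ ω, 0 ≤ p ω) (α : Ω → D) (d : D) :
    0 ≤ pmOf p α d :=
  Finset.sum_nonneg fun ω _ => by by_cases h : α ω = d <;> simp [pmOf, h, hp ω]

lemma sum_pmOf (p : Ω → ℝ) (α : Ω → D) : ∑ d, pmOf p α d = ∑ ω, p ω := by
  simp only [pmOf]
  rw [Finset.sum_comm]
  exact Finset.sum_congr rfl fun ω _ => by simp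

lemma pmOf_le_one {p : Ω → ℝ} (hp : ∀ ω, 0 ≤ p ω) (hps : ∑ ω, p ω = 1)
    (α : Ω → D) (d : D) : pmOf p α d ≤ 1 := by
  have h := Finset.single_le_sum (f := fun d => pmOf p α d)
    (fun d _ => pmOf_nonneg hp α d) (Finset.mem_univ d)
  rw [sum_pmOf, hps] at h
  exact h

lemma pmOf_comp (p : Ω → ℝ) (α : Ω → D) (h : D → E) (e : E) :
    pmOf p (fun ω => h (α ω)) e = ∑ d, if h d = e then pmOf p α d else 0 := by
  simp only [pmOf]
  have hR : ∀ d : D, (if h d = e then (∑ ω, if α ω = d then p ω else 0) else 0)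
      = ∑ ω, (if α ω = d then (if h d = e then p ω else 0) else 0) := by
    intro d
    by_cases h1 : h d = e <;> simp [h1]
  rw [Finset.sum_congr rfl fun d _ => hR d, Finset.sum_comm]
  refine Finset.sum_congr rfl fun ω _ => ?_
  simp [Finset.sum_ite_eq]

lemma sum_pmOf_mul (p : Ω → ℝ) (α : Ω → D) (h : D → E) (f : E → ℝ) :
    ∑ e, pmOf p (fun ω => h (α ω)) e * f e = ∑ d, pmOf p α d * f (h d) := by
  simp only [pmOf_comp, Finset.sum_mul]
  rw [Finset.sum_comm]
  refine Finset.sum_congr rfl fun d _ => ?_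
  have : ∀ e : E, (if h d = e then pmOf p α d else 0) * f e
      = (if h d = e then pmOf p α d * f e else 0) := fun e => by
    by_cases h1 : h d = e <;> simp [h1]
  rw [Finset.sum_congr rfl fun e _ => this e, Finset.sum_ite_eq]
  simp

lemma pmOf_le_comp {p : Ω → ℝ} (hp : ∀ ω, 0 ≤ p ω) (α : Ω → D) (h : D → E) (d : D) :
    pmOf p α d ≤ pmOf p (fun ω => h (α ω)) (h d) := by
  calc pmOf p α d = if h d = h d then pmOf p α d else 0 := by simp
    _ ≤ ∑ d', if h d' = h d then pmOf p α d' else 0 :=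
        Finset.single_le_sum (f := fun d' => if h d' = h d then pmOf p α d' else 0)
          (fun d' _ => by by_cases h1 : h d' = h d <;> simp [h1, pmOf_nonneg hp α d'])
          (Finset.mem_univ d)
    _ = pmOf p (fun ω => h (α ω)) (h d) := (pmOf_comp p α h (h d)).symm

lemma negMulLog_add_le {a b : ℝ} (ha : 0 ≤ a) (hb : 0 ≤ b) :
    Real.negMulLog (a + b) ≤ Real.negMulLog a + Real.negMulLog b := by
  rcases eq_or_lt_of_le ha with h | h
  · simp [← h]
  rcases eq_or_lt_of_le hb with h' | h'
  · simp [← h']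
  have h1 : a * Real.log a ≤ a * Real.log (a + b) :=
    mul_le_mul_of_nonneg_left (Real.log_le_log h (by linarith)) ha
  have h2 : b * Real.log b ≤ b * Real.log (a + b) :=
    mul_le_mul_of_nonneg_left (Real.log_le_log h' (by linarith)) hb
  simp only [Real.negMulLog, neg_mul]
  nlinarith

lemma negMulLog_sum_le {ι : Type*} (s : Finset ι) (x : ι → ℝ) (hx : ∀ i ∈ s, 0 ≤ x i) :
    Real.negMulLog (∑ i ∈ s, x i) ≤ ∑ i ∈ s, Real.negMulLog (x i) := by
  induction s using Finset.cons_induction with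
  | empty => simp
  | cons i s hi ih =>
    rw [Finset.sum_cons, Finset.sum_cons]
    refine le_trans (negMulLog_add_le (hx i (Finset.mem_cons_self i s))
      (Finset.sum_nonneg fun j hj => hx j (Finset.mem_cons_of_mem hj))) ?_
    exact add_le_add (le_refl _) (ih fun j hj => hx j (Finset.mem_cons_of_mem hj))

lemma entOf_comp_le {p : Ω → ℝ} (hp : ∀ ω, 0 ≤ p ω) (α : Ω → D) (h : D → E) :
    entOf p (fun ω => h (α ω)) ≤ entOf p α := by
  simp only [entOf]
  calc ∑ e, Real.negMulLog (pmOf p (fun ω => h (α ω)) e)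
      ≤ ∑ e, ∑ d, Real.negMulLog (if h d = e then pmOf p α d else 0) := by
        refine Finset.sum_le_sum fun e _ => ?_
        rw [pmOf_comp]
        exact negMulLog_sum_le _ _ fun d _ => by
          by_cases h1 : h d = e <;> simp [h1, pmOf_nonneg hp α d]
    _ = ∑ d, Real.negMulLog (pmOf p α d) := by
        rw [Finset.sum_comm]
        refine Finset.sum_congr rfl fun d _ => ?_
        have : ∀ e : E, Real.negMulLog (if h d = e then pmOf p α d else 0)
            = (if h d = e then Real.negMulLog (pmOf p α d) else 0) := fun e => by
          by_cases h1 : h d = e <;> simp [h1]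
        rw [Finset.sum_congr rfl fun e _ => this e, Finset.sum_ite_eq]
        simp

/-- Gibbs' inequality. -/
lemma gibbs (P Q : D → ℝ) (hP0 : ∀ d, 0 ≤ P d) (hPs : ∑ d, P d = 1)
    (hQ0 : ∀ d, 0 ≤ Q d) (hQs : ∑ d, Q d ≤ 1)
    (hdom : ∀ d, P d ≠ 0 → Q d ≠ 0) :
    ∑ d, Real.negMulLog (P d) ≤ -∑ d, P d * Real.log (Q d) := by
  have key : ∀ d, P d * Real.log (Q d) - P d * Real.log (P d) ≤ Q d - P d := by
    intro d
    by_cases hP : P d = 0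
    · simp [hP, hQ0 d]
    · have hPpos : 0 < P d := lt_of_le_of_ne (hP0 d) (Ne.symm hP)
      have hQpos : 0 < Q d := lt_of_le_of_ne (hQ0 d) (Ne.symm (hdom d hP))
      have hlog := Real.log_le_sub_one_of_pos (div_pos hQpos hPpos)
      rw [Real.log_div (ne_of_gt hQpos) hP] at hlog
      have hmul := mul_le_mul_of_nonneg_left hlog hPpos.le
      have hPQ : P d * (Q d / P d - 1) = Q d - P d := by
        field_simp
      rw [hPQ, mul_sub] at hmul
      linarith
  have hsum : ∑ d, (P d * Real.log (Q d) - P d * Real.log (P d)) ≤ ∑ d, (Q d - P d) :=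
    Finset.sum_le_sum fun d _ => key d
  rw [Finset.sum_sub_distrib, Finset.sum_sub_distrib, hPs] at hsum
  have hent : ∑ d, Real.negMulLog (P d) = -∑ d, P d * Real.log (P d) := by
    simp [Real.negMulLog, Finset.sum_neg_distrib]
  rw [hent]
  linarith

lemma sum_negMulLog_nonneg (P : D → ℝ) (hP0 : ∀ d, 0 ≤ P d) (hPs : ∑ d, P d = 1) :
    0 ≤ ∑ d, Real.negMulLog (P d) := by
  refine Finset.sum_nonneg fun d _ => Real.negMulLog_nonneg (hP0 d) ?_
  have := Finset.single_le_sum (f := P) (fun d _ => hP0 d) (Finset.mem_univ d)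
  rw [hPs] at this; exact this

lemma sum_negMulLog_le_log_card (P : D → ℝ) (hP0 : ∀ d, 0 ≤ P d) (hPs : ∑ d, P d = 1) :
    ∑ d, Real.negMulLog (P d) ≤ Real.log (Fintype.card D) := by
  have hD : (Fintype.card D : ℝ) ≠ 0 := by
    have : Nonempty D := by
      by_contra h
      rw [not_nonempty_iff] at h
      simp [Finset.univ_eq_empty] at hPs
    simp [Fintype.card_ne_zero]
  have := gibbs P (fun _ => (Fintype.card D : ℝ)⁻¹) hP0 hPs
    (fun _ => by positivity) (by simp [Finset.sum_const, Finset.card_univ]; rw [mul_inv_cancel₀ hD]) 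
    (fun d _ => by positivity)
  calc ∑ d, Real.negMulLog (P d) ≤ -∑ d, P d * Real.log ((Fintype.card D : ℝ)⁻¹) := this
    _ = ∑ d, P d * Real.log (Fintype.card D) := by
        rw [Real.log_inv, ← Finset.sum_neg_distrib]
        exact Finset.sum_congr rfl fun d _ => by ring
    _ = Real.log (Fintype.card D) := by rw [← Finset.sum_mul, hPs, one_mul]



lemma pmOf_id (p : Ω → ℝ) [DecidableEq Ω] (d : Ω) : pmOf p (fun ω => ω) d = p d := by
  simp [pmOf, Finset.sum_ite_eq']

lemma pmOf_abs_diff_le (u w : Ω → ℝ) (θ : Ω → D) (b : D) :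
    |pmOf u θ b - pmOf w θ b| ≤ ∑ ω, |u ω - w ω| := by
  rw [pmOf, pmOf, ← Finset.sum_sub_distrib]
  refine (Finset.abs_sum_le_sum_abs _ _).trans (Finset.sum_le_sum fun ω _ => ?_)
  by_cases h : θ ω = b <;> simp [h, abs_nonneg]

lemma sum_pmOf_pair_fst (p : Ω → ℝ) (α : Ω → D) (γ : Ω → C) (c : C) :
    ∑ a, pmOf p (fun ω => (α ω, γ ω)) (a, c) = pmOf p γ c := by
  rw [show pmOf p γ c
      = ∑ q : D × C, if q.2 = c then pmOf p (fun ω => (α ω, γ ω)) q else 0 from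
    pmOf_comp p (fun ω => (α ω, γ ω)) Prod.snd c]
  rw [Fintype.sum_prod_type]
  exact (Finset.sum_congr rfl fun a _ => by simp [Finset.sum_ite_eq']).symm

lemma entOf_eq_neg_sum (p : Ω → ℝ) (α : Ω → D) :
    entOf p α = -∑ d, pmOf p α d * Real.log (pmOf p α d) := by
  simp [entOf, Real.negMulLog, Finset.sum_neg_distrib]

/-- Single-Gibbs subadditivity over a tuple of observables, conditioned on `Ψ`. -/
lemma entOf_tuple_le {I : Type*} [Fintype I] [Nonempty I] [DecidableEq I]
    {Y Z : Type*} [Fintype Y] [DecidableEq Y] [Fintype Z] [DecidableEq Z]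
    (p : Ω → ℝ) (hp : ∀ ω, 0 ≤ p ω) (hps : ∑ ω, p ω = 1)
    (W : I → Ω → Y) (Ψ : Ω → Z) :
    entOf p (fun ω => ((fun i => W i ω, Ψ ω) : (I → Y) × Z))
      + ((Fintype.card I : ℝ) - 1) * entOf p Ψ
      ≤ ∑ i, entOf p (fun ω => (W i ω, Ψ ω)) := by
  classical
  set J : Ω → (I → Y) × Z := fun ω => ((fun i => W i ω), Ψ ω) with hJ
  set P : (I → Y) × Z → ℝ := pmOf p J with hPdef
  set Pm : I → Y × Z → ℝ := fun i => pmOf p (fun ω => (W i ω, Ψ ω)) with hPm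
  set R : Z → ℝ := pmOf p Ψ with hRdef
  set m1 : ℕ := Fintype.card I - 1 with hm1
  have hcard : Fintype.card I = m1 + 1 := (Nat.succ_pred_eq_of_pos Fintype.card_pos).symm
  have hmarg : ∀ i z, ∑ y, Pm i (y, z) = R z := fun i z => sum_pmOf_pair_fst p (W i) Ψ z
  have hPle : ∀ i (d : (I → Y) × Z), P d ≤ Pm i (d.1 i, d.2) := by
    intro i d
    exact pmOf_le_comp hp J (fun q => (q.1 i, q.2)) d
  have hPleR : ∀ d : (I → Y) × Z, P d ≤ R d.2 := fun d => pmOf_le_comp hp J Prod.snd d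
  set Q : (I → Y) × Z → ℝ :=
    fun d => if R d.2 = 0 then 0 else (∏ i, Pm i (d.1 i, d.2)) / (R d.2) ^ m1 with hQdef
  have hP0 : ∀ d, 0 ≤ P d := pmOf_nonneg hp J
  have hPm0 : ∀ i e, 0 ≤ Pm i e := fun i e => pmOf_nonneg hp _ e
  have hR0 : ∀ z, 0 ≤ R z := pmOf_nonneg hp Ψ
  have hQ0 : ∀ d, 0 ≤ Q d := by
    intro d
    by_cases hz : R d.2 = 0
    · simp [hQdef, hz]
    · simp only [hQdef, hz, if_false]
      exact div_nonneg (Finset.prod_nonneg fun i _ => hPm0 i _) (pow_nonneg (hR0 _) _)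
  have hQs : ∑ d, Q d ≤ 1 := by
    have h1 : ∑ d : (I → Y) × Z, Q d = ∑ z, ∑ a : I → Y, Q (a, z) := by
      rw [Fintype.sum_prod_type]; exact Finset.sum_comm
    have h2 : ∀ z, ∑ a : I → Y, Q (a, z) ≤ R z := by
      intro z
      by_cases hz : R z = 0
      · simp [hQdef, hz]
      · have hprod : ∑ a : I → Y, ∏ i, Pm i (a i, z) = ∏ i, (∑ y, Pm i (y, z)) :=
          (Fintype.prod_sum fun i y => Pm i (y, z)).symm
        have : ∑ a : I → Y, Q (a, z) = (∑ a : I → Y, ∏ i, Pm i (a i, z)) / (R z) ^ m1 := by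
          simp [hQdef, hz, Finset.sum_div]
        rw [this, hprod]
        have : ∏ i : I, (∑ y, Pm i (y, z)) = (R z) ^ (m1 + 1) := by
          rw [Finset.prod_congr rfl fun i _ => hmarg i z, Finset.prod_const, Finset.card_univ,
            hcard]
        rw [this, pow_succ, mul_comm (R z ^ m1) (R z), mul_div_assoc,
          div_self (pow_ne_zero _ hz), mul_one]
    calc ∑ d, Q d = ∑ z, ∑ a : I → Y, Q (a, z) := h1
      _ ≤ ∑ z, R z := Finset.sum_le_sum fun z _ => h2 z
      _ = 1 := by rw [hRdef, sum_pmOf, hps]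
  have hdom : ∀ d, P d ≠ 0 → Q d ≠ 0 := by
    intro d hPd
    have hPdpos : 0 < P d := lt_of_le_of_ne (hP0 d) (Ne.symm hPd)
    have hRpos : 0 < R d.2 := lt_of_lt_of_le hPdpos (hPleR d)
    have hprodpos : 0 < ∏ i, Pm i (d.1 i, d.2) :=
      Finset.prod_pos fun i _ => lt_of_lt_of_le hPdpos (hPle i d)
    have : Q d = (∏ i, Pm i (d.1 i, d.2)) / (R d.2) ^ m1 := by simp [hQdef, hRpos.ne']
    rw [this]
    exact (div_pos hprodpos (pow_pos hRpos m1)).ne'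
  have hlog : ∀ d, P d * Real.log (Q d)
      = (∑ i, P d * Real.log (Pm i (d.1 i, d.2))) - (m1 : ℝ) * (P d * Real.log (R d.2)) := by
    intro d
    by_cases hPd : P d = 0
    · simp [hPd]
    · have hPdpos : 0 < P d := lt_of_le_of_ne (hP0 d) (Ne.symm hPd)
      have hRpos : 0 < R d.2 := lt_of_lt_of_le hPdpos (hPleR d)
      have hprodpos : 0 < ∏ i, Pm i (d.1 i, d.2) :=
        Finset.prod_pos fun i _ => lt_of_lt_of_le hPdpos (hPle i d)
      have hQd : Q d = (∏ i, Pm i (d.1 i, d.2)) / (R d.2) ^ m1 := by simp [hQdef, hRpos.ne']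
      rw [hQd, Real.log_div hprodpos.ne' (pow_ne_zero _ hRpos.ne'),
        Real.log_prod (fun i _ => (lt_of_lt_of_le hPdpos (hPle i d)).ne'), Real.log_pow]
      rw [mul_sub, Finset.mul_sum]
      ring
  have hsum : ∑ d, P d * Real.log (Q d)
      = (∑ i, ∑ e : Y × Z, Pm i e * Real.log (Pm i e))
        - (m1 : ℝ) * (∑ z, R z * Real.log (R z)) := by
    rw [Finset.sum_congr rfl fun d _ => hlog d, Finset.sum_sub_distrib]
    congr 1
    · rw [Finset.sum_comm]
      refine Finset.sum_congr rfl fun i _ => ?_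
      exact (sum_pmOf_mul p J (fun q => (q.1 i, q.2)) (fun e => Real.log (Pm i e))).symm
    · rw [← Finset.mul_sum]
      congr 1
      exact (sum_pmOf_mul p J Prod.snd (fun z => Real.log (R z))).symm
  have hgibbs := gibbs P Q hP0 (by rw [hPdef, sum_pmOf, hps]) hQ0 hQs hdom
  rw [hsum] at hgibbs
  have e1 : entOf p J = ∑ d, Real.negMulLog (P d) := rfl
  have e2 : entOf p Ψ = -∑ z, R z * Real.log (R z) := entOf_eq_neg_sum p Ψ
  have e3 : ∀ i, entOf p (fun ω => (W i ω, Ψ ω)) = -∑ e, Pm i e * Real.log (Pm i e) :=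
    fun i => entOf_eq_neg_sum p _
  have hcast : (Fintype.card I : ℝ) - 1 = (m1 : ℝ) := by
    rw [hcard]; push_cast; ring
  rw [e1, hcast, e2, Finset.sum_congr rfl fun i _ => e3 i, Finset.sum_neg_distrib]
  linarith [hgibbs]


/-- Conditioning on a coarser observable increases conditional entropy. -/
lemma entOf_cond_comp_le (p : Ω → ℝ) (hp : ∀ ω, 0 ≤ p ω) (hps : ∑ ω, p ω = 1)
    (α : Ω → D) (β : Ω → E) (g : E → C) :
    entOf p (fun ω => (α ω, β ω)) + entOf p (fun ω => g (β ω))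
      ≤ entOf p (fun ω => (α ω, g (β ω))) + entOf p β := by
  classical
  set P : D × E → ℝ := pmOf p (fun ω => (α ω, β ω)) with hPdef
  set Pa : D × C → ℝ := pmOf p (fun ω => (α ω, g (β ω))) with hPadef
  set Pb : E → ℝ := pmOf p β with hPbdef
  set Pc : C → ℝ := pmOf p (fun ω => g (β ω)) with hPcdef
  set Q : D × E → ℝ :=
    fun d => if Pc (g d.2) = 0 then 0 else Pa (d.1, g d.2) * Pb d.2 / Pc (g d.2) with hQdef
  have hP0 : ∀ d, 0 ≤ P d := pmOf_nonneg hp _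
  have hPa0 : ∀ e, 0 ≤ Pa e := pmOf_nonneg hp _
  have hPb0 : ∀ e, 0 ≤ Pb e := pmOf_nonneg hp _
  have hPc0 : ∀ c, 0 ≤ Pc c := pmOf_nonneg hp _
  have hPle_a : ∀ d : D × E, P d ≤ Pa (d.1, g d.2) := fun d =>
    pmOf_le_comp hp (fun ω => (α ω, β ω)) (fun q => (q.1, g q.2)) d
  have hPle_b : ∀ d : D × E, P d ≤ Pb d.2 := fun d =>
    pmOf_le_comp hp (fun ω => (α ω, β ω)) Prod.snd d
  have hPle_c : ∀ e : E, Pb e ≤ Pc (g e) := fun e => pmOf_le_comp hp β g e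
  have hmarg : ∀ c, ∑ a, Pa (a, c) = Pc c := fun c =>
    sum_pmOf_pair_fst p α (fun ω => g (β ω)) c
  have hQ0 : ∀ d, 0 ≤ Q d := by
    intro d
    by_cases hz : Pc (g d.2) = 0
    · simp [hQdef, hz]
    · simp only [hQdef, hz, if_false]
      exact div_nonneg (mul_nonneg (hPa0 _) (hPb0 _)) (hPc0 _)
  have hQs : ∑ d, Q d ≤ 1 := by
    have h1 : ∑ d : D × E, Q d = ∑ b, ∑ a, Q (a, b) := by
      rw [Fintype.sum_prod_type]; exact Finset.sum_comm
    have h2 : ∀ b, ∑ a, Q (a, b) ≤ Pb b := by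
      intro b
      by_cases hz : Pc (g b) = 0
      · simp [hQdef, hz, hPb0 b]
      · have : ∑ a, Q (a, b) = (∑ a, Pa (a, g b)) * Pb b / Pc (g b) := by
          simp only [hQdef, hz, if_false]
          rw [Finset.sum_mul, Finset.sum_div]
        rw [this, hmarg, mul_comm, mul_div_assoc, div_self hz, mul_one]
    calc ∑ d, Q d = ∑ b, ∑ a, Q (a, b) := h1
      _ ≤ ∑ b, Pb b := Finset.sum_le_sum fun b _ => h2 b
      _ = 1 := by rw [hPbdef, sum_pmOf, hps]
  have hdom : ∀ d, P d ≠ 0 → Q d ≠ 0 := by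
    intro d hPd
    have hPdpos : 0 < P d := lt_of_le_of_ne (hP0 d) (Ne.symm hPd)
    have hbpos : 0 < Pb d.2 := lt_of_lt_of_le hPdpos (hPle_b d)
    have hcpos : 0 < Pc (g d.2) := lt_of_lt_of_le hbpos (hPle_c d.2)
    have hapos : 0 < Pa (d.1, g d.2) := lt_of_lt_of_le hPdpos (hPle_a d)
    have : Q d = Pa (d.1, g d.2) * Pb d.2 / Pc (g d.2) := by simp [hQdef, hcpos.ne']
    rw [this]
    exact (div_pos (mul_pos hapos hbpos) hcpos).ne'
  have hlog : ∀ d : D × E, P d * Real.log (Q d)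
      = P d * Real.log (Pa (d.1, g d.2)) + P d * Real.log (Pb d.2)
        - P d * Real.log (Pc (g d.2)) := by
    intro d
    by_cases hPd : P d = 0
    · simp [hPd]
    · have hPdpos : 0 < P d := lt_of_le_of_ne (hP0 d) (Ne.symm hPd)
      have hbpos : 0 < Pb d.2 := lt_of_lt_of_le hPdpos (hPle_b d)
      have hcpos : 0 < Pc (g d.2) := lt_of_lt_of_le hbpos (hPle_c d.2)
      have hapos : 0 < Pa (d.1, g d.2) := lt_of_lt_of_le hPdpos (hPle_a d)
      have hQd : Q d = Pa (d.1, g d.2) * Pb d.2 / Pc (g d.2) := by simp [hQdef, hcpos.ne']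
      rw [hQd, Real.log_div (mul_pos hapos hbpos).ne' hcpos.ne',
        Real.log_mul hapos.ne' hbpos.ne']
      ring
  have hsum : ∑ d, P d * Real.log (Q d)
      = (∑ e : D × C, Pa e * Real.log (Pa e)) + (∑ b, Pb b * Real.log (Pb b))
        - (∑ c, Pc c * Real.log (Pc c)) := by
    rw [Finset.sum_congr rfl fun d _ => hlog d, Finset.sum_sub_distrib,
      Finset.sum_add_distrib]
    congr 1
    congr 1
    · exact sum_pmOf_mul p (fun ω => (α ω, β ω)) (fun q => (q.1, g q.2))
        (fun e => Real.log (Pa e)) |>.symm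
    · exact (sum_pmOf_mul p (fun ω => (α ω, β ω)) Prod.snd (fun b => Real.log (Pb b))).symm
    · exact (sum_pmOf_mul p (fun ω => (α ω, β ω)) (fun q => g q.2)
        (fun c => Real.log (Pc c))).symm
  have hgibbs := gibbs P Q hP0 (by rw [hPdef, sum_pmOf, hps]) hQ0 hQs hdom
  rw [hsum] at hgibbs
  have e1 : entOf p (fun ω => (α ω, β ω)) = -∑ d, P d * Real.log (P d) :=
    entOf_eq_neg_sum p _
  have e2 : entOf p (fun ω => (α ω, g (β ω))) = -∑ e, Pa e * Real.log (Pa e) :=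
    entOf_eq_neg_sum p _
  have e3 : entOf p β = -∑ b, Pb b * Real.log (Pb b) := entOf_eq_neg_sum p β
  have e4 : entOf p (fun ω => g (β ω)) = -∑ c, Pc c * Real.log (Pc c) := entOf_eq_neg_sum p _
  have e1' : entOf p (fun ω => (α ω, β ω)) = ∑ d, Real.negMulLog (P d) := rfl
  rw [e1', e2, e3, e4]
  linarith [hgibbs]


end PMFLemmas


lemma negMulLog_uniform {ε : ℝ} (hε : 0 < ε) :
    ∃ δ > 0, ∀ x y : ℝ, 0 ≤ x → x ≤ 1 → 0 ≤ y → y ≤ 1 → |x - y| ≤ δ →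
      |Real.negMulLog x - Real.negMulLog y| ≤ ε := by
  have hc : UniformContinuousOn Real.negMulLog (Set.Icc 0 1) :=
    isCompact_Icc.uniformContinuousOn_of_continuous Real.continuous_negMulLog.continuousOn
  rw [Metric.uniformContinuousOn_iff] at hc
  obtain ⟨δ, hδ, h⟩ := hc ε hε
  refine ⟨δ / 2, by positivity, fun x y hx0 hx1 hy0 hy1 hxy => ?_⟩
  have := h x ⟨hx0, hx1⟩ y ⟨hy0, hy1⟩ (by rw [Real.dist_eq]; linarith)
  rw [Real.dist_eq] at this
  linarith

section Bridge

variable {X : Type*} [Fintype X] [MeasurableSpace X] [MeasurableSingletonClass X]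

noncomputable def pmfOf (η : Measure X) : X → ℝ := fun x => (η {x}).toReal

lemma pmfOf_nonneg (η : Measure X) (x : X) : 0 ≤ pmfOf η x := ENNReal.toReal_nonneg

lemma sum_pmfOf (η : Measure X) [IsProbabilityMeasure η] : ∑ x, pmfOf η x = 1 := by
  have h : ∑ x ∈ (Finset.univ : Finset X), η (id ⁻¹' {x}) = η (id ⁻¹' ↑(Finset.univ : Finset X)) :=
    sum_measure_preimage_singleton _ (fun y _ => by simpa using measurableSet_singleton y)
  simp only [Set.preimage_id, Finset.coe_univ] at h
  rw [measure_univ] at h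
  have h2 : ∑ x : X, pmfOf η x = (∑ x : X, η {x}).toReal := by
    rw [ENNReal.toReal_sum (fun x _ => measure_ne_top η _)]
    rfl
  rw [h2, h, ENNReal.toReal_one]

lemma pmfOf_map {D : Type*} [Fintype D] [DecidableEq D] [MeasurableSpace D]
    [MeasurableSingletonClass D] (η : Measure X) [IsFiniteMeasure η] (f : X → D) (d : D) :
    pmfOf (Measure.map f η) d = pmOf (pmfOf η) f d := by
  classical
  have h1 : (f ⁻¹' {d}) = (id ⁻¹' ↑(Finset.univ.filter fun x => f x = d)) := by
    ext x; simp
  have h2 := sum_measure_preimage_singleton (μ := η)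
    (Finset.univ.filter fun x => f x = d) (f := id)
    (fun y _ => by simpa using measurableSet_singleton y)
  simp only [Set.preimage_id] at h2 h1
  show (Measure.map f η {d}).toReal = _
  rw [Measure.map_apply (measurable_of_countable f) (measurableSet_singleton d), h1, ← h2]
  rw [ENNReal.toReal_sum (fun x _ => measure_ne_top η _)]
  rw [Finset.sum_filter]
  rfl

end Bridge

section ShannonBridge

variable {X : Type*} [Fintype X] [MeasurableSpace X] [MeasurableSingletonClass X]

lemma shannonEntropy_eq' (η : Measure X) :
    shannonEntropy η = ∑ x, Real.negMulLog (pmfOf η x) := by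
  simp [shannonEntropy, Real.negMulLog_eq_neg, Finset.sum_neg_distrib, pmfOf]

lemma shannonEntropy_map {D : Type*} [Fintype D] [DecidableEq D] [MeasurableSpace D]
    [MeasurableSingletonClass D] (η : Measure X) [IsFiniteMeasure η] (f : X → D) :
    shannonEntropy (Measure.map f η) = entOf (pmfOf η) f := by
  rw [shannonEntropy_eq']
  exact Finset.sum_congr rfl fun d _ => by rw [pmfOf_map]

end ShannonBridge

theorem stmt6 {G : Type*} [Group G] [Countable G] [DecidableEq G]
    (V : ℕ → Type*) [∀ n, Fintype (V n)] [∀ n, DecidableEq (V n)]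
    (σ : ∀ n, G → Equiv.Perm (V n)) (hσ : IsSoficApprox σ)
    (A B : Type*) [Fintype A] [MeasurableSpace A] [DiscreteMeasurableSpace A]
    [Fintype B] [MeasurableSpace B] [DiscreteMeasurableSpace B]
    (μ : Measure (G → A)) [IsProbabilityMeasure μ]
    (hinv : ∀ g : G, Measure.map (fun (a : G → A) (k : G) => a (k * g)) μ = μ)
    (μn : ∀ n, Measure (V n → A)) (hμn : ∀ n, IsProbabilityMeasure (μn n))
    (hconv : LocalWeakStarConverges σ μn μ)
    (F : Finset G) (θ : (↥F → A) → B)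
    -- `φ = θ ∘ π_F` is the corresponding `F`-local observable; below it appears
    -- directly as `fun a => θ (fun g : ↥F => a g.1)`.
    (c : ℝ) (hc : 0 < c)
    (S : ∀ n, Finset (V n)) (hS : ∀ n, c * (Fintype.card (V n) : ℝ) ≤ ((S n).card : ℝ)) :
    ∀ ε : ℝ, 0 < ε → ∀ᶠ n in atTop,
      shannonEntropy (Measure.map (fun (a : G → A) (g : ↥F) => a g.1) μ) -
          (1 / ((S n).card : ℝ)) *
            shannonEntropy (Measure.map
              (fun (x : V n → A) (w : ↥((F ×ˢ S n).image (fun p => σ n p.1 p.2))) => x w.1)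
              (μn n)) ≥
        obsEntropy μ (fun a => θ (fun g : ↥F => a g.1)) -
          (1 / ((S n).card : ℝ)) *
            shannonEntropy (Measure.map (fun (b : V n → B) (s : ↥(S n)) => b s.1)
              (Measure.map (fun (x : V n → A) (v : V n) => θ (fun g : ↥F => x (σ n g.1 v)))
                (μn n))) - ε := by
  classical
  intro ε hε
  -- nonemptiness
  have hGA : Nonempty (G → A) := by
    by_contra h
    rw [not_nonempty_iff] at h
    have h0 : (Set.univ : Set (G → A)) = ∅ := Set.univ_eq_empty_iff.mpr h
    have h1 : μ Set.univ = 1 := measure_univ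
    rw [h0] at h1
    simp at h1
  have hA : Nonempty A := ⟨Classical.arbitrary (G → A) 1⟩
  -- the marginal of μ on F
  have hπF : Measurable (fun (a : G → A) (g : ↥F) => a g.1) :=
    measurable_pi_lambda _ fun g => measurable_pi_apply g.1
  set lam : Measure (↥F → A) := Measure.map (fun (a : G → A) (g : ↥F) => a g.1) μ with hlam
  haveI : IsProbabilityMeasure lam := Measure.isProbabilityMeasure_map hπF.aemeasurable
  set q : (↥F → A) → ℝ := pmfOf lam with hqdef
  have hq0 : ∀ y, 0 ≤ q y := fun y => pmfOf_nonneg lam y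
  have hqs : ∑ y, q y = 1 := sum_pmfOf lam
  have hq1 : ∀ y, q y ≤ 1 := by
    intro y
    have h := Finset.single_le_sum (f := q) (fun y _ => hq0 y) (Finset.mem_univ y)
    rw [hqs] at h; exact h
  -- constants
  have hcardY : (1 : ℝ) ≤ (Fintype.card (↥F → A) : ℝ) := by exact_mod_cast Fintype.card_pos
  set L : ℝ := Real.log (Fintype.card (↥F → A)) with hLdef
  have hL0 : 0 ≤ L := Real.log_nonneg hcardY
  set K : ℝ := (Fintype.card (↥F → A) : ℝ) + (Fintype.card B : ℝ) with hKdef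
  have hKpos : 0 < K + 1 := by positivity
  set ε' : ℝ := ε / (8 * (K + 1)) with hε'def
  have hε'0 : 0 < ε' := by positivity
  obtain ⟨δ₀, hδ₀, hUC⟩ := negMulLog_uniform hε'0
  set δ : ℝ := min (δ₀ / 2) (c * ε / (4 * (L + 1))) with hδdef
  have hδpos : 0 < δ := lt_min (by positivity) (by positivity)
  have hδδ₀ : 2 * δ ≤ δ₀ := by
    have := min_le_left (δ₀ / 2) (c * ε / (4 * (L + 1)))
    rw [← hδdef] at this; linarith
  have hδε : δ ≤ c * ε / (4 * (L + 1)) := by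
    have := min_le_right (δ₀ / 2) (c * ε / (4 * (L + 1)))
    rw [← hδdef] at this; exact this
  -- the base quantity
  set base : ℝ := (∑ y, Real.negMulLog (q y)) - (∑ b, Real.negMulLog (pmOf q θ b)) with hbasedef
  have hbase0 : 0 ≤ base := by
    have h1 : entOf q (fun y => θ y) ≤ entOf q (fun y => y) :=
      entOf_comp_le hq0 (fun y => y) θ
    have h2 : entOf q (fun y => y) = ∑ y, Real.negMulLog (q y) :=
      Finset.sum_congr rfl fun y _ => by rw [pmOf_id]
    have h3 : entOf q (fun y => θ y) = ∑ b, Real.negMulLog (pmOf q θ b) := rfl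
    rw [hbasedef]; linarith
  -- events
  have hE1 := hconv F δ hδpos
  have hE2 := hσ.1.eventually_ge_atTop (Nat.ceil (1 / c))
  filter_upwards [hE1, hE2] with n hgood hcardV
  haveI := hμn n
  set m : ℕ := (S n).card with hmdef
  have hm1 : (1 : ℝ) ≤ (m : ℝ) := by
    have hceil : (1 / c : ℝ) ≤ (Nat.ceil (1 / c) : ℝ) := Nat.le_ceil _
    have h2 : ((Nat.ceil (1 / c) : ℕ) : ℝ) ≤ (Fintype.card (V n) : ℝ) := by exact_mod_cast hcardV
    have h3 : (1 : ℝ) ≤ c * (Fintype.card (V n) : ℝ) := by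
      have : (1 / c : ℝ) ≤ (Fintype.card (V n) : ℝ) := le_trans hceil h2
      calc (1 : ℝ) = c * (1 / c) := by field_simp
        _ ≤ c * (Fintype.card (V n) : ℝ) := by
            exact mul_le_mul_of_nonneg_left this hc.le
    exact le_trans h3 (hS n)
  have hmpos : (0 : ℝ) < (m : ℝ) := lt_of_lt_of_le one_pos hm1
  have hSne : (S n).Nonempty := by
    rw [← Finset.card_pos]
    by_contra h
    push_neg at h
    interval_cases hcard : (S n).card
    rw [hmdef] at hmpos
    simp [hcard] at hmpos
  haveI hSneI : Nonempty ↥(S n) := ⟨⟨hSne.choose, hSne.choose_spec⟩⟩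
  -- pmf of μn
  set p : (V n → A) → ℝ := pmfOf (μn n) with hpdef
  have hp0 : ∀ x, 0 ≤ p x := fun x => pmfOf_nonneg _ x
  have hps : ∑ x, p x = 1 := sum_pmfOf (μn n)
  -- observables
  set T : Finset (V n) := (F ×ˢ S n).image (fun p => σ n p.1 p.2) with hTdef
  set Wmap : ↥(S n) → (V n → A) → (↥F → A) := fun v x g => x (σ n g.1 v.1) with hWdef
  set Ψ : (V n → A) → (↥(S n) → B) := fun x v => θ (fun g => x (σ n g.1 v.1)) with hΨdef
  set ν : ↥(S n) → (↥F → A) → ℝ := fun v => pmOf p (Wmap v) with hνdef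
  have hν0 : ∀ v y, 0 ≤ ν v y := fun v y => pmOf_nonneg hp0 (Wmap v) y
  have hνs : ∀ v, ∑ y, ν v y = 1 := fun v => by
    rw [hνdef]; rw [sum_pmOf]; exact hps
  have hν1 : ∀ v y, ν v y ≤ 1 := fun v y => pmOf_le_one hp0 hps (Wmap v) y
  -- entropy identifications
  have hHA : shannonEntropy (Measure.map (fun (x : V n → A) (w : ↥T) => x w.1) (μn n))
      = entOf p (fun (x : V n → A) (w : ↥T) => x w.1) := shannonEntropy_map (μn n) _
  have hmapmap : Measure.map (fun (b : V n → B) (s : ↥(S n)) => b s.1)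
      (Measure.map (fun (x : V n → A) (v : V n) => θ (fun g : ↥F => x (σ n g.1 v))) (μn n))
      = Measure.map Ψ (μn n) := by
    rw [Measure.map_map (measurable_of_countable _) (measurable_of_countable _)]
    rfl
  have hHB : shannonEntropy (Measure.map Ψ (μn n)) = entOf p Ψ := shannonEntropy_map (μn n) Ψ
  have hHF : shannonEntropy lam = ∑ y, Real.negMulLog (q y) := shannonEntropy_eq' lam
  have hobs : obsEntropy μ (fun a => θ (fun g : ↥F => a g.1))
      = ∑ b, Real.negMulLog (pmOf q θ b) := by
    have h1 : Measure.map (fun a : G → A => θ (fun g : ↥F => a g.1)) μ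
        = Measure.map θ lam := by
      rw [hlam, Measure.map_map (measurable_of_countable θ) hπF]
      rfl
    rw [obsEntropy, h1, shannonEntropy_map lam θ]
    rfl
  -- Step A: data processing from the window tuple to the coordinates on T
  have hchoice : ∀ w : ↥T, ∃ pr : G × V n, (pr.1 ∈ F ∧ pr.2 ∈ S n) ∧ σ n pr.1 pr.2 = w.1 := by
    intro w
    have hw : w.1 ∈ (F ×ˢ S n).image (fun p => σ n p.1 p.2) := w.2
    rw [Finset.mem_image] at hw
    obtain ⟨pr, hpr, he⟩ := hw
    exact ⟨pr, Finset.mem_product.mp hpr, he⟩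
  choose prg hprmem hpreq using hchoice
  have stepA : entOf p (fun (x : V n → A) (w : ↥T) => x w.1)
      ≤ entOf p (fun x => ((fun v : ↥(S n) => Wmap v x), Ψ x)) := by
    have hfactor : (fun (x : V n → A) (w : ↥T) => x w.1)
        = fun x => (fun az : (↥(S n) → (↥F → A)) × (↥(S n) → B) =>
            fun w : ↥T => az.1 ⟨(prg w).2, (hprmem w).2⟩ ⟨(prg w).1, (hprmem w).1⟩)
          ((fun v : ↥(S n) => Wmap v x), Ψ x) := by
      funext x w
      show x w.1 = Wmap ⟨(prg w).2, (hprmem w).2⟩ x ⟨(prg w).1, (hprmem w).1⟩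
      rw [hWdef]
      simp only
      rw [hpreq w]
    rw [hfactor]
    exact entOf_comp_le hp0 (fun x => ((fun v : ↥(S n) => Wmap v x), Ψ x))
      (fun az => fun w : ↥T => az.1 ⟨(prg w).2, (hprmem w).2⟩ ⟨(prg w).1, (hprmem w).1⟩)
  -- Step B: single-Gibbs subadditivity
  have stepB := entOf_tuple_le p hp0 hps Wmap Ψ
  have hcardS : (Fintype.card ↥(S n) : ℝ) = (m : ℝ) := by
    rw [hmdef]; exact_mod_cast congrArg Nat.cast (Fintype.card_coe (S n))
  -- Step C: per-vertex conditional bound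
  have stepC : ∀ v : ↥(S n),
      entOf p (fun x => (Wmap v x, Ψ x)) - entOf p Ψ
        ≤ (∑ y, Real.negMulLog (ν v y)) - (∑ b, Real.negMulLog (pmOf (ν v) θ b)) := by
    intro v
    have h1 : entOf p (fun x => (Wmap v x, Ψ x)) + entOf p (fun x => Ψ x v)
        ≤ entOf p (fun x => (Wmap v x, Ψ x v)) + entOf p Ψ :=
      entOf_cond_comp_le p hp0 hps (Wmap v) Ψ (fun z => z v)
    have h2 : entOf p (fun x => (Wmap v x, Ψ x v)) ≤ entOf p (Wmap v) :=
      entOf_comp_le hp0 (Wmap v) (fun y => (y, θ y))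
    have h3 : entOf p (fun x => Ψ x v) = ∑ b, Real.negMulLog (pmOf (ν v) θ b) := by
      refine Finset.sum_congr rfl fun b _ => ?_
      congr 1
      exact pmOf_comp p (Wmap v) θ b
    have h4 : entOf p (Wmap v) = ∑ y, Real.negMulLog (ν v y) := rfl
    linarith
  -- good vertices
  set good : V n → Prop := fun v =>
    tvDist (Measure.map (fun (x : V n → A) (g : ↥F) => x (σ n g.1 v)) (μn n))
      (Measure.map (fun (a : G → A) (g : ↥F) => a g.1) μ) < δ with hgooddef
  have hsumabs : ∀ v : ↥(S n), good v.1 → ∑ y, |ν v y - q y| ≤ 2 * δ := by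
    intro v hv
    rw [hgooddef] at hv
    simp only [tvDist] at hv
    have h1 : ∀ y, (Measure.map (fun (x : V n → A) (g : ↥F) => x (σ n g.1 v.1)) (μn n)
        {y}).toReal = ν v y := fun y => pmfOf_map (μn n) (Wmap v) y
    have h2 : ∑ y, |ν v y - q y|
        = ∑ y, |((Measure.map (fun (x : V n → A) (g : ↥F) => x (σ n g.1 v.1)) (μn n))
            {y}).toReal - ((Measure.map (fun (a : G → A) (g : ↥F) => a g.1) μ) {y}).toReal| := by
      refine Finset.sum_congr rfl fun y _ => ?_
      rw [h1 y]
      rfl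
    rw [h2]
    linarith [hv]
  -- per-vertex good bound
  have hgoodv : ∀ v : ↥(S n), good v.1 →
      (∑ y, Real.negMulLog (ν v y)) - (∑ b, Real.negMulLog (pmOf (ν v) θ b))
        ≤ base + ε / 2 := by
    intro v hv
    have habs := hsumabs v hv
    have hcoordY : ∀ y, |ν v y - q y| ≤ δ₀ := by
      intro y
      have h := Finset.single_le_sum (f := fun y => |ν v y - q y|)
        (fun y _ => abs_nonneg _) (Finset.mem_univ y)
      linarith
    have hcoordB : ∀ b, |pmOf (ν v) θ b - pmOf q θ b| ≤ δ₀ := by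
      intro b
      have h := pmOf_abs_diff_le (ν v) q θ b
      linarith
    have hpm0 : ∀ b, 0 ≤ pmOf (ν v) θ b := fun b => pmOf_nonneg (hν0 v) θ b
    have hpm1 : ∀ b, pmOf (ν v) θ b ≤ 1 := fun b => pmOf_le_one (hν0 v) (hνs v) θ b
    have hqm0 : ∀ b, 0 ≤ pmOf q θ b := fun b => pmOf_nonneg hq0 θ b
    have hqm1 : ∀ b, pmOf q θ b ≤ 1 := fun b => pmOf_le_one hq0 hqs θ b
    have hYdiff : ∑ y, Real.negMulLog (ν v y) - ∑ y, Real.negMulLog (q y)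
        ≤ (Fintype.card (↥F → A) : ℝ) * ε' := by
      rw [← Finset.sum_sub_distrib]
      calc ∑ y, (Real.negMulLog (ν v y) - Real.negMulLog (q y))
          ≤ ∑ y : (↥F → A), ε' := Finset.sum_le_sum fun y _ => by
            have := hUC (ν v y) (q y) (hν0 v y) (hν1 v y) (hq0 y) (hq1 y) (hcoordY y)
            have h := abs_le.mp this
            linarith [h.2]
        _ = (Fintype.card (↥F → A) : ℝ) * ε' := by
            rw [Finset.sum_const, Finset.card_univ, nsmul_eq_mul]
    have hBdiff : ∑ b, Real.negMulLog (pmOf q θ b) - ∑ b, Real.negMulLog (pmOf (ν v) θ b)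
        ≤ (Fintype.card B : ℝ) * ε' := by
      rw [← Finset.sum_sub_distrib]
      calc ∑ b, (Real.negMulLog (pmOf q θ b) - Real.negMulLog (pmOf (ν v) θ b))
          ≤ ∑ _b : B, ε' := Finset.sum_le_sum fun b _ => by
            have := hUC (pmOf q θ b) (pmOf (ν v) θ b) (hqm0 b) (hqm1 b) (hpm0 b) (hpm1 b)
              (by rw [abs_sub_comm]; exact hcoordB b)
            have h := abs_le.mp this
            linarith [h.2]
        _ = (Fintype.card B : ℝ) * ε' := by
            rw [Finset.sum_const, Finset.card_univ, nsmul_eq_mul]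
    have hKe : (Fintype.card (↥F → A) : ℝ) * ε' + (Fintype.card B : ℝ) * ε' ≤ ε / 2 := by
      have hK0 : 0 ≤ K := by rw [hKdef]; positivity
      have h1 : (Fintype.card (↥F → A) : ℝ) * ε' + (Fintype.card B : ℝ) * ε' = K * ε' := by
        rw [hKdef]; ring
      have h2 : K * ε' ≤ ε / 2 := by
        rw [hε'def, mul_comm, div_mul_eq_mul_div,
          div_le_div_iff₀ (by positivity : (0:ℝ) < 8 * (K + 1)) (by norm_num : (0:ℝ) < 2)]
        nlinarith [mul_nonneg hε.le hK0]
      linarith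
    rw [hbasedef]
    linarith
  -- per-vertex universal bound
  have hbadv : ∀ v : ↥(S n),
      (∑ y, Real.negMulLog (ν v y)) - (∑ b, Real.negMulLog (pmOf (ν v) θ b)) ≤ L := by
    intro v
    have h1 : ∑ y, Real.negMulLog (ν v y) ≤ L :=
      sum_negMulLog_le_log_card (ν v) (hν0 v) (hνs v)
    have h2 : 0 ≤ ∑ b, Real.negMulLog (pmOf (ν v) θ b) := by
      refine sum_negMulLog_nonneg _ (fun b => pmOf_nonneg (hν0 v) θ b) ?_
      rw [sum_pmOf]; exact hνs v
    linarith
  -- counting bad vertices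
  have hcount : ((Finset.univ.filter (fun v : ↥(S n) => ¬ good v.1)).card : ℝ)
      ≤ δ * (Fintype.card (V n) : ℝ) := by
    have hinj : (Finset.univ.filter (fun v : ↥(S n) => ¬ good v.1)).card
        ≤ (Finset.univ.filter (fun v : V n => ¬ good v)).card := by
      apply Finset.card_le_card_of_injOn (fun v => v.1)
      · intro v hv
        simp only [Finset.mem_filter, Finset.mem_univ, true_and] at hv ⊢
        simpa using hv
      · intro a _ b _ h
        exact Subtype.ext h
    have hcompl : (Finset.univ.filter (fun v : V n => good v)).card
        + (Finset.univ.filter (fun v : V n => ¬ good v)).card = Fintype.card (V n) := by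
      rw [Finset.card_filter_add_card_filter_not, Finset.card_univ]
    have hNat : (Nat.card {v : V n // good v} : ℝ)
        = ((Finset.univ.filter (fun v : V n => good v)).card : ℝ) := by
      rw [Nat.card_eq_fintype_card, Fintype.card_subtype]
    have hgood2 : ((1 - δ) * (Fintype.card (V n) : ℝ))
        ≤ ((Finset.univ.filter (fun v : V n => good v)).card : ℝ) := by
      rw [← hNat]
      exact hgood
    have h2 : ((Finset.univ.filter (fun v : ↥(S n) => ¬ good v.1)).card : ℝ)
        ≤ ((Finset.univ.filter (fun v : V n => ¬ good v)).card : ℝ) := by exact_mod_cast hinj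
    have h3 : ((Finset.univ.filter (fun v : V n => good v)).card : ℝ)
        + ((Finset.univ.filter (fun v : V n => ¬ good v)).card : ℝ)
        = (Fintype.card (V n) : ℝ) := by exact_mod_cast hcompl
    nlinarith
  -- summing up
  have main : ∑ v : ↥(S n),
      ((∑ y, Real.negMulLog (ν v y)) - (∑ b, Real.negMulLog (pmOf (ν v) θ b)))
      ≤ (m : ℝ) * (base + ε) := by
    rw [← Finset.sum_filter_add_sum_filter_not Finset.univ (fun v : ↥(S n) => good v.1)]
    have hg : ∑ v ∈ Finset.univ.filter (fun v : ↥(S n) => good v.1),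
        ((∑ y, Real.negMulLog (ν v y)) - (∑ b, Real.negMulLog (pmOf (ν v) θ b)))
        ≤ (m : ℝ) * (base + ε / 2) := by
      calc ∑ v ∈ Finset.univ.filter (fun v : ↥(S n) => good v.1),
            ((∑ y, Real.negMulLog (ν v y)) - (∑ b, Real.negMulLog (pmOf (ν v) θ b)))
          ≤ ∑ _v ∈ Finset.univ.filter (fun v : ↥(S n) => good v.1), (base + ε / 2) :=
            Finset.sum_le_sum fun v hv => hgoodv v (Finset.mem_filter.mp hv).2
        _ = ((Finset.univ.filter (fun v : ↥(S n) => good v.1)).card : ℝ) * (base + ε / 2) := by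
            rw [Finset.sum_const, nsmul_eq_mul]
        _ ≤ (m : ℝ) * (base + ε / 2) := by
            have hle : ((Finset.univ.filter (fun v : ↥(S n) => good v.1)).card : ℝ) ≤ (m : ℝ) := by
              have := Finset.card_filter_le Finset.univ (fun v : ↥(S n) => good v.1)
              rw [Finset.card_univ] at this
              have h2 : (Fintype.card ↥(S n) : ℝ) = (m : ℝ) := hcardS
              exact_mod_cast le_trans (Nat.cast_le.mpr this) (le_of_eq h2)
            have hb : 0 ≤ base + ε / 2 := by linarith
            exact mul_le_mul_of_nonneg_right hle hb
    have hb : ∑ v ∈ Finset.univ.filter (fun v : ↥(S n) => ¬ good v.1),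
        ((∑ y, Real.negMulLog (ν v y)) - (∑ b, Real.negMulLog (pmOf (ν v) θ b)))
        ≤ (m : ℝ) * (ε / 2) := by
      calc ∑ v ∈ Finset.univ.filter (fun v : ↥(S n) => ¬ good v.1),
            ((∑ y, Real.negMulLog (ν v y)) - (∑ b, Real.negMulLog (pmOf (ν v) θ b)))
          ≤ ∑ _v ∈ Finset.univ.filter (fun v : ↥(S n) => ¬ good v.1), L :=
            Finset.sum_le_sum fun v _ => hbadv v
        _ = ((Finset.univ.filter (fun v : ↥(S n) => ¬ good v.1)).card : ℝ) * L := by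
            rw [Finset.sum_const, nsmul_eq_mul]
        _ ≤ (δ * (Fintype.card (V n) : ℝ)) * L :=
            mul_le_mul_of_nonneg_right hcount hL0
        _ ≤ (m : ℝ) * (ε / 2) := by
            have hCV0 : (0 : ℝ) ≤ (Fintype.card (V n) : ℝ) := Nat.cast_nonneg _
            have hcm : c * (Fintype.card (V n) : ℝ) ≤ (m : ℝ) := hS n
            have hL1 : (0 : ℝ) < L + 1 := by linarith
            have step1 : δ * (Fintype.card (V n) : ℝ) * L
                ≤ (c * ε / (4 * (L + 1))) * (Fintype.card (V n) : ℝ) * L := by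
              have := mul_le_mul_of_nonneg_right hδε (mul_nonneg hCV0 hL0)
              calc δ * (Fintype.card (V n) : ℝ) * L
                  = δ * ((Fintype.card (V n) : ℝ) * L) := by ring
                _ ≤ (c * ε / (4 * (L + 1))) * ((Fintype.card (V n) : ℝ) * L) := this
                _ = (c * ε / (4 * (L + 1))) * (Fintype.card (V n) : ℝ) * L := by ring
            have step2 : (c * ε / (4 * (L + 1))) * (Fintype.card (V n) : ℝ) * L
                ≤ (m : ℝ) * (ε / 2) := by
              rw [div_mul_eq_mul_div, div_mul_eq_mul_div, div_le_iff₀ (by positivity)]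
              have hcε : c * (Fintype.card (V n) : ℝ) * (ε * L) ≤ (m : ℝ) * (ε * L) :=
                mul_le_mul_of_nonneg_right hcm (mul_nonneg hε.le hL0)
              nlinarith [mul_nonneg (mul_nonneg hmpos.le hε.le) hL0,
                mul_nonneg hmpos.le hε.le]
            linarith
    have hsplitm : (m : ℝ) * (base + ε) = (m : ℝ) * (base + ε / 2) + (m : ℝ) * (ε / 2) := by
      ring
    rw [hsplitm]
    exact add_le_add hg hb
  -- chain everything
  have chain : entOf p (fun (x : V n → A) (w : ↥T) => x w.1) - entOf p Ψ
      ≤ (m : ℝ) * (base + ε) := by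
    have hsumsub : ∑ v : ↥(S n), (entOf p (fun x => (Wmap v x, Ψ x)) - entOf p Ψ)
        ≤ ∑ v : ↥(S n),
          ((∑ y, Real.negMulLog (ν v y)) - (∑ b, Real.negMulLog (pmOf (ν v) θ b))) :=
      Finset.sum_le_sum fun v _ => stepC v
    have hexpand : ∑ v : ↥(S n), (entOf p (fun x => (Wmap v x, Ψ x)) - entOf p Ψ)
        = (∑ v : ↥(S n), entOf p (fun x => (Wmap v x, Ψ x))) - (m : ℝ) * entOf p Ψ := by
      rw [Finset.sum_sub_distrib, Finset.sum_const, Finset.card_univ, nsmul_eq_mul, hcardS]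
    have hSB : entOf p (fun x => ((fun v : ↥(S n) => Wmap v x), Ψ x))
        + ((m : ℝ) - 1) * entOf p Ψ
        ≤ ∑ v : ↥(S n), entOf p (fun x => (Wmap v x, Ψ x)) := by
      rw [← hcardS]
      exact stepB
    linarith [stepA, hsumsub, hexpand, hSB]
  -- conclude
  rw [ge_iff_le, hHF, hHA, hmapmap, hHB, hobs]
  have hfinal : (1 / (m : ℝ)) * (entOf p (fun (x : V n → A) (w : ↥T) => x w.1) - entOf p Ψ)
      ≤ base + ε := by
    rw [one_div, inv_mul_le_iff₀ hmpos]
    calc entOf p (fun (x : V n → A) (w : ↥T) => x w.1) - entOf p Ψ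
        ≤ (m : ℝ) * (base + ε) := chain
      _ = (m : ℝ) * (base + ε) := rfl
  rw [hbasedef] at hfinal
  have hmul : (1 / (m : ℝ)) * (entOf p (fun (x : V n → A) (w : ↥T) => x w.1) - entOf p Ψ)
      = (1 / (m : ℝ)) * entOf p (fun (x : V n → A) (w : ↥T) => x w.1)
        - (1 / (m : ℝ)) * entOf p Ψ := by ring
  rw [hmul] at hfinal
  linarith
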